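/- Let V be a non-negative closed densely defined symmetric operator on a complex Hilbert space H. Let W_F be a non-negative selfadjoint operator such that W_F∘W_F is a non-negative selfadjoint extension of V and D(V) is a core for W_F (i.e., W_F = V_F^{1/2}), and let W_K be a non-negative selfadjoint operator such that W_K∘W_K is a non-negative selfadjoint extension of V, D(W_K) = { h ∈ H : sup_{f ∈ D(V), Vf ≠ 0} |⟨h, Vf⟩|²/⟨f, Vf⟩ < ∞ }, and ‖W_K h‖² equals this supremum for all h ∈ D(W_K) (i.e., W_K = V_K^{1/2}). Then: (1) D(W_F) ⊆ D(W_K) and ‖W_K h‖ = ‖W_F h‖ for every h ∈ D(W_F); (2) there exists a bounded linear operator U on H with ‖U‖ ≤ 1 such that U(W_F h) = W_K h for all h ∈ D(W_F), ‖Ux‖ = ‖x‖ for all x in the closure of ran(W_F), Ux = 0 for all x orthogonal to ran(W_F), and ran(U) is contained in the closure of ran(W_K). -/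

import Mathlib

noncomputable section

open Complex

variable {H : Type*} [NormedAddCommGroup H] [InnerProductSpace ℂ H] [CompleteSpace H]

local notation "⟪" x ", " y "⟫" => @inner ℂ _ _ x y

/-- A partially defined operator is *dissipative* if `Im ⟪ψ, A ψ⟫ ≥ 0` for all `ψ` in its
domain. -/
def Dissipative (A : H →ₗ.[ℂ] H) : Prop :=
  ∀ ψ : A.domain, 0 ≤ (⟪(ψ : H), A ψ⟫).im

/-- A partially defined operator is *symmetric* if `⟪f, S g⟫ = ⟪S f, g⟫` on its domain. -/
def IsSymmetricP (S : H →ₗ.[ℂ] H) : Prop :=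
  ∀ f g : S.domain, ⟪(f : H), S g⟫ = ⟪S f, (g : H)⟫

/-- A partially defined operator is *non-negative* if `⟪f, V f⟫` is real and `≥ 0` on its
domain. -/
def NonnegP (V : H →ₗ.[ℂ] H) : Prop :=
  ∀ f : V.domain, (⟪(f : H), V f⟫).im = 0 ∧ 0 ≤ (⟪(f : H), V f⟫).re

/-- `T = W ∘ W` as partially defined operators: the domain of `T` is
`{x ∈ D(W) : W x ∈ D(W)}` and there `T x = W (W x)`. -/
def IsSqrtOf (W T : H →ₗ.[ℂ] H) : Prop :=
  (∀ x : H, x ∈ T.domain ↔ ∃ hx : x ∈ W.domain, W ⟨x, hx⟩ ∈ W.domain) ∧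
  ∀ (x : H) (hxT : x ∈ T.domain) (hxW : x ∈ W.domain) (hWx : W ⟨x, hxW⟩ ∈ W.domain),
    T ⟨x, hxT⟩ = W ⟨W ⟨x, hxW⟩, hWx⟩

/-- The Ando–Nishio supremum `sup { |⟪h, V f⟫|² / ⟪f, V f⟫ : f ∈ D(V), V f ≠ 0 }`,
computed in `[0, ∞]`. -/
def anSup (V : H →ₗ.[ℂ] H) (h : H) : ENNReal :=
  ⨆ f : {f : V.domain // V f ≠ 0},
    ENNReal.ofReal (‖⟪h, V f.1⟫‖ ^ 2) / ENNReal.ofReal ((⟪(f.1 : H), V f.1⟫).re)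

/-- `W` is the square root of the Friedrichs extension of `V`: `W` is a non-negative
selfadjoint operator, `W ∘ W` is a non-negative selfadjoint extension of `V`, and `D(V)` is a
core for `W`. -/
def IsFriedrichsSqrt (V W : H →ₗ.[ℂ] H) : Prop :=
  IsSelfAdjoint W ∧ NonnegP W ∧
    (∃ T : H →ₗ.[ℂ] H, IsSqrtOf W T ∧ IsSelfAdjoint T ∧ NonnegP T ∧ V ≤ T) ∧
    (W.domRestrict V.domain).closure = W

/-- `W` is the square root of the Kreĭn–von Neumann extension of `V` (Ando–Nishio
characterization): `W` is a non-negative selfadjoint operator, `W ∘ W` is a non-negative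
selfadjoint extension of `V`, the domain of `W` consists exactly of those `h` with
`anSup V h < ∞`, and `‖W h‖² = anSup V h` there. -/
def IsKreinSqrt (V W : H →ₗ.[ℂ] H) : Prop :=
  IsSelfAdjoint W ∧ NonnegP W ∧
    (∃ T : H →ₗ.[ℂ] H, IsSqrtOf W T ∧ IsSelfAdjoint T ∧ NonnegP T ∧ V ≤ T) ∧
    (∀ h : H, h ∈ W.domain ↔ anSup V h < ⊤) ∧
    ∀ (h : H) (hh : h ∈ W.domain), ENNReal.ofReal (‖W ⟨h, hh⟩‖ ^ 2) = anSup V h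

/-- `D(V_F^{1/2}) ⊆ D(V_K^{1/2})` with `‖V_K^{1/2} h‖ = ‖V_F^{1/2} h‖`
there, and there is a partial isometry `U` with `U V_F^{1/2} h = V_K^{1/2} h`, isometric on
the closure of `ran V_F^{1/2}`, vanishing on its orthogonal complement, with range inside the
closure of `ran V_K^{1/2}`. -/
lemma sa_symm {A : H →ₗ.[ℂ] H} (hA : IsSelfAdjoint A) (x y : A.domain) :
    ⟪(x : H), A y⟫ = ⟪A x, (y : H)⟫ := by
  have hd : Dense (A.domain : Set H) := hA.dense_domain
  have hA' : A.adjoint = A := hA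
  have hdom : A.adjoint.domain = A.domain := congrArg LinearPMap.domain hA'
  have hx' : (x : H) ∈ A.adjoint.domain := hdom.symm ▸ x.2
  have hfa := LinearPMap.adjoint_isFormalAdjoint hd (⟨x, hx'⟩ : A.adjoint.domain) y
  have happ : A.adjoint ⟨x, hx'⟩ = A x := by
    rcases LinearPMap.ext_iff.mp hA' with ⟨hd2, h2⟩
    exact h2 (x := (x : H)) (hf := hx') (hg := x.2)
  rw [← happ, hfa]

lemma facts {V W T : H →ₗ.[ℂ] H} (hSq : IsSqrtOf W T) (hVT : V ≤ T)
    (f : V.domain) :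
    ∃ (hfW : (f : H) ∈ W.domain) (hWfW : W ⟨f, hfW⟩ ∈ W.domain),
      V f = W ⟨W ⟨f, hfW⟩, hWfW⟩ := by
  have hfT : (f : H) ∈ T.domain := hVT.1 f.2
  obtain ⟨hfW, hWfW⟩ := (hSq.1 f).mp hfT
  refine ⟨hfW, hWfW, ?_⟩
  have h1 : V f = T ⟨f, hfT⟩ := hVT.2 rfl
  rw [h1, hSq.2 f hfT hfW hWfW]

lemma facts2 {V W T : H →ₗ.[ℂ] H} (hW : IsSelfAdjoint W) (hSq : IsSqrtOf W T) (hVT : V ≤ T)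
    (f : V.domain) (h : W.domain) (hfW : (f : H) ∈ W.domain) (hWfW : W ⟨f, hfW⟩ ∈ W.domain)
    (hVf : V f = W ⟨W ⟨f, hfW⟩, hWfW⟩) :
    ⟪(h : H), V f⟫ = ⟪W h, W ⟨f, hfW⟩⟫ ∧ (⟪(f : H), V f⟫).re = ‖W ⟨f, hfW⟩‖ ^ 2 ∧
      (V f ≠ 0 ↔ W ⟨f, hfW⟩ ≠ 0) := by
  set y : W.domain := ⟨W ⟨f, hfW⟩, hWfW⟩ with hy
  have h1 : ⟪(h : H), V f⟫ = ⟪W h, W ⟨f, hfW⟩⟫ := by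
    rw [hVf]; exact sa_symm hW h y
  have h2' : ⟪((⟨f, hfW⟩ : W.domain) : H), W y⟫ = ⟪W ⟨f, hfW⟩, (y : H)⟫ := sa_symm hW _ y
  have h2 : (⟪(f : H), V f⟫).re = ‖W ⟨f, hfW⟩‖ ^ 2 := by
    rw [hVf]
    have : ⟪(f : H), W y⟫ = ⟪W ⟨f, hfW⟩, W ⟨f, hfW⟩⟫ := h2'
    rw [this, inner_self_eq_norm_sq_to_K]
    norm_cast
  refine ⟨h1, h2, ?_⟩
  constructor
  · intro hVne hWf0
    apply hVne
    rw [hVf]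
    have : y = (0 : W.domain) := Subtype.ext hWf0
    rw [this, LinearPMap.map_zero]
  · intro hWne hV0
    apply hWne
    have : (⟪(f : H), V f⟫).re = 0 := by rw [hV0, inner_zero_right]; simp
    rw [h2] at this
    have := pow_eq_zero_iff (n := 2) (by norm_num) |>.mp this
    exact norm_eq_zero.mp this

set_option maxHeartbeats 2000000 in
lemma anSup_eq {V WF T : H →ₗ.[ℂ] H} (hWFsa : IsSelfAdjoint WF) (hSq : IsSqrtOf WF T)
    (hVT : V ≤ T) (hcore : (WF.domRestrict V.domain).closure = WF) (h : WF.domain) :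
    anSup V (h : H) = ENNReal.ofReal (‖WF h‖ ^ 2) := by
  set x : H := WF h with hx
  apply le_antisymm
  · -- each term is at most ‖x‖²
    apply iSup_le
    rintro ⟨f, hVfne⟩
    obtain ⟨hfW, hWfW, hVf⟩ := facts hSq hVT f
    obtain ⟨e1, e2, e3⟩ := facts2 hWFsa hSq hVT f h hfW hWfW hVf
    set y : H := WF ⟨f, hfW⟩ with hy
    have hyne : y ≠ 0 := e3.mp hVfne
    have hypos : (0:ℝ) < ‖y‖ ^ 2 := by have := norm_pos_iff.mpr hyne; positivity
    rw [e1, e2]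
    rw [ENNReal.div_le_iff (by simp [ENNReal.ofReal_eq_zero, not_le, hypos, hyne])
      (by simp)]
    rw [← ENNReal.ofReal_mul (by positivity)]
    apply ENNReal.ofReal_le_ofReal
    calc ‖⟪x, y⟫‖ ^ 2 ≤ (‖x‖ * ‖y‖) ^ 2 := by
          apply pow_le_pow_left₀ (norm_nonneg _) (norm_inner_le_norm x y)
      _ = ‖x‖ ^ 2 * ‖y‖ ^ 2 := by ring
  · -- the sup is at least ‖x‖²
    by_cases hx0 : x = 0
    · simp [hx0]
    set n := ‖x‖ with hn
    have hnpos : 0 < n := norm_pos_iff.mpr hx0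
    by_contra hcon
    push_neg at hcon
    have hne : anSup V (h : H) ≠ ⊤ := (hcon.trans ENNReal.ofReal_lt_top).ne
    set c := (anSup V (h : H)).toReal with hcdef
    have hc : anSup V (h : H) = ENNReal.ofReal c := (ENNReal.ofReal_toReal hne).symm
    have hc0 : 0 ≤ c := ENNReal.toReal_nonneg
    have hcn : c < n ^ 2 := by
      rw [hc] at hcon
      exact (ENNReal.ofReal_lt_ofReal_iff (by positivity)).mp hcon
    set t := n ^ 2 - c with htdef
    have ht : 0 < t := by simp only [htdef]; linarith
    set ε := min (n / 2) (t / (8 * n)) with hεdef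
    have hε : 0 < ε := lt_min (by positivity) (by positivity)
    have hεn : ε ≤ n / 2 := min_le_left _ _
    have hεt : ε ≤ t / (8 * n) := min_le_right _ _
    -- (h, x) is in the closure of the graph of the restriction
    set R0 := WF.domRestrict V.domain with hR0
    have hgraph : ((h : H), x) ∈ closure (R0.graph : Set (H × H)) := by
      have hmem : ((h : H), x) ∈ WF.graph := WF.mem_graph h
      by_cases hcl : R0.IsClosable
      · have hgg := hcl.graph_closure_eq_closure_graph
        rw [hcore] at hgg
        rw [← hgg] at hmem
        rw [← Submodule.topologicalClosure_coe]
        exact hmem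
      · rw [LinearPMap.closure_def' hcl] at hcore
        apply subset_closure
        show ((h : H), x) ∈ R0.graph
        rw [hcore]
        exact hmem
    obtain ⟨b, hb, hbd⟩ := Metric.mem_closure_iff.mp hgraph ε hε
    obtain ⟨g, hg1, hg2⟩ := R0.mem_graph_iff.mp hb
    have hgV : (g : H) ∈ V.domain := by
      have hle : R0.domain ≤ V.domain := by
        rw [hR0, LinearPMap.domRestrict_domain]
        exact inf_le_left
      exact hle g.2
    set fV : V.domain := ⟨(g : H), hgV⟩ with hfV
    obtain ⟨hfW, hWfW, hVf⟩ := facts hSq hVT fV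
    obtain ⟨e1, e2, e3⟩ := facts2 hWFsa hSq hVT fV h hfW hWfW hVf
    set y : H := WF ⟨fV, hfW⟩ with hy
    have hR0g : R0 g = y := by
      rw [hy]
      exact LinearPMap.domRestrict_apply rfl
    have hδ : ‖x - y‖ < ε := by
      have hxy : dist x y ≤ dist ((h : H), x) b := by
        have h1 : dist x y = dist ((h : H), x).2 b.2 := by rw [← hg2, hR0g]
        rw [h1, Prod.dist_eq]
        exact le_max_right _ _
      have : dist x y < ε := lt_of_le_of_lt hxy hbd
      rwa [dist_eq_norm] at this
    set δ := ‖x - y‖ with hδdef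
    have hδ0 : 0 ≤ δ := norm_nonneg _
    have hyn : ‖y‖ ≤ n + δ := by
      calc ‖y‖ = ‖x - (x - y)‖ := by congr 1; abel
        _ ≤ ‖x‖ + ‖x - y‖ := norm_sub_le _ _
    have hyl : n - δ ≤ ‖y‖ := by
      have := norm_sub_norm_le x y
      linarith
    have hypos : 0 < ‖y‖ := by
      have h1 : δ < n / 2 := lt_of_lt_of_le hδ hεn
      linarith
    have hy0 : y ≠ 0 := norm_pos_iff.mp hypos
    have hVfne : V fV ≠ 0 := e3.mpr hy0
    have hre : n ^ 2 - n * δ ≤ (⟪x, y⟫).re := by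
      have hsub : ⟪x, x - y⟫ = ⟪x, x⟫ - ⟪x, y⟫ := inner_sub_right x x y
      have hrr : (⟪x, y⟫).re = (⟪x, x⟫).re - (⟪x, x - y⟫).re := by
        rw [hsub]; simp
      have hxx : (⟪x, x⟫).re = n ^ 2 := by
        rw [inner_self_eq_norm_sq_to_K]; norm_cast
      have habs : (⟪x, x - y⟫).re ≤ n * δ := by
        calc (⟪x, x - y⟫).re ≤ ‖⟪x, x - y⟫‖ := Complex.re_le_norm _
          _ ≤ ‖x‖ * ‖x - y‖ := norm_inner_le_norm _ _
      linarith
    have hrenn : 0 ≤ n ^ 2 - n * δ := by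
      have h1 : δ < n / 2 := lt_of_lt_of_le hδ hεn
      nlinarith
    have hinner : (n ^ 2 - n * δ) ^ 2 ≤ ‖⟪x, y⟫‖ ^ 2 := by
      apply pow_le_pow_left₀ hrenn
      calc n ^ 2 - n * δ ≤ (⟪x, y⟫).re := hre
        _ ≤ ‖⟪x, y⟫‖ := Complex.re_le_norm _
    have hysq : ‖y‖ ^ 2 ≤ (n + δ) ^ 2 := pow_le_pow_left₀ (norm_nonneg _) hyn 2
    have hkey : c * ‖y‖ ^ 2 < ‖⟪x, y⟫‖ ^ 2 := by
      have hδt : δ < t / (8 * n) := lt_of_lt_of_le hδ hεt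
      have hδn : δ < n / 2 := lt_of_lt_of_le hδ hεn
      have hcval : c = n ^ 2 - t := by simp only [htdef]; ring
      have h8 : 8 * n * δ < t := by
        rw [lt_div_iff₀ (by positivity)] at hδt; linarith
      have hA : c * ‖y‖ ^ 2 ≤ c * (n + δ) ^ 2 := mul_le_mul_of_nonneg_left hysq hc0
      have hB : c * (n + δ) ^ 2 < (n ^ 2 - n * δ) ^ 2 := by
        nlinarith [mul_pos (sub_pos.mpr h8) (mul_pos hnpos hnpos),
          mul_nonneg (mul_nonneg ht.le hδ0) hnpos.le,
          mul_nonneg ht.le (mul_nonneg hδ0 hδ0)]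
      linarith
    have hy2pos : (0:ℝ) < ‖y‖ ^ 2 := by positivity
    have hratio : c < ‖⟪x, y⟫‖ ^ 2 / ‖y‖ ^ 2 := (lt_div_iff₀ hy2pos).mpr hkey
    have hterm : ENNReal.ofReal (‖⟪(h : H), V fV⟫‖ ^ 2) / ENNReal.ofReal ((⟪(fV : H), V fV⟫).re)
        = ENNReal.ofReal (‖⟪x, y⟫‖ ^ 2 / ‖y‖ ^ 2) := by
      rw [e1, e2, ENNReal.ofReal_div_of_pos hy2pos]
    have hle := le_iSup (fun f : {f : V.domain // V f ≠ 0} =>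
      ENNReal.ofReal (‖⟪(h : H), V f.1⟫‖ ^ 2) / ENNReal.ofReal ((⟪(f.1 : H), V f.1⟫).re))
      ⟨fV, hVfne⟩
    rw [hterm] at hle
    have hlt2 : ENNReal.ofReal c < ENNReal.ofReal (‖⟪x, y⟫‖ ^ 2 / ‖y‖ ^ 2) :=
      (ENNReal.ofReal_lt_ofReal_iff (lt_of_le_of_lt hc0 hratio)).mpr hratio
    have : anSup V (h : H) < anSup V (h : H) := by
      calc anSup V (h : H) = ENNReal.ofReal c := hc
        _ < ENNReal.ofReal (‖⟪x, y⟫‖ ^ 2 / ‖y‖ ^ 2) := hlt2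
        _ ≤ anSup V (h : H) := hle
    exact absurd this (lt_irrefl _)


set_option maxHeartbeats 2000000 in
theorem statement6
    (V WF WK : H →ₗ.[ℂ] H)
    (hVdense : Dense (V.domain : Set H)) (hVclosed : V.IsClosed)
    (hVsymm : IsSymmetricP V) (hVnn : NonnegP V)
    (hWF : IsFriedrichsSqrt V WF) (hWK : IsKreinSqrt V WK) :
    (WF.domain ≤ WK.domain ∧
      ∀ (h : H) (hF : h ∈ WF.domain) (hK : h ∈ WK.domain),
        ‖WK ⟨h, hK⟩‖ = ‖WF ⟨h, hF⟩‖) ∧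
    ∃ U : H →L[ℂ] H, ‖U‖ ≤ 1 ∧
      (∀ (h : H) (hF : h ∈ WF.domain) (hK : h ∈ WK.domain),
        U (WF ⟨h, hF⟩) = WK ⟨h, hK⟩) ∧
      (∀ x ∈ closure (Set.range fun g : WF.domain => WF g), ‖U x‖ = ‖x‖) ∧
      (∀ x : H, (∀ g : WF.domain, ⟪WF g, x⟫ = 0) → U x = 0) ∧
      ∀ x : H, U x ∈ closure (Set.range fun g : WK.domain => WK g) := by
  obtain ⟨hWFsa, hWFnn, ⟨T, hSq, hTsa, hTnn, hVT⟩, hcore⟩ := hWF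
  obtain ⟨hWKsa, hWKnn, ⟨TK, hSqK, hTKsa, hTKnn, hVTK⟩, hdomK, hnormK⟩ := hWK
  -- Part 1
  have hle : WF.domain ≤ WK.domain := by
    intro x hx
    rw [hdomK x, anSup_eq hWFsa hSq hVT hcore ⟨x, hx⟩]
    exact ENNReal.ofReal_lt_top
  have hnorm : ∀ (h : H) (hF : h ∈ WF.domain) (hK : h ∈ WK.domain),
      ‖WK ⟨h, hK⟩‖ = ‖WF ⟨h, hF⟩‖ := by
    intro h hF hK
    have h1 := hnormK h hK
    rw [anSup_eq hWFsa hSq hVT hcore ⟨h, hF⟩] at h1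
    have h2 : ‖WK ⟨h, hK⟩‖ ^ 2 = ‖WF ⟨h, hF⟩‖ ^ 2 :=
      (ENNReal.ofReal_eq_ofReal_iff (by positivity) (by positivity)).mp h1
    rw [← Real.sqrt_sq (norm_nonneg (WK ⟨h, hK⟩)), ← Real.sqrt_sq (norm_nonneg (WF ⟨h, hF⟩)), h2]
  refine ⟨⟨hle, hnorm⟩, ?_⟩
  -- Part 2: construction of U
  set A : WF.domain →ₗ[ℂ] H := WK.toFun.comp (Submodule.inclusion hle) with hAdef
  have hA : ∀ z : WF.domain, A z = WK ⟨(z : H), hle z.2⟩ := fun z => rfl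
  have hAnorm : ∀ z : WF.domain, ‖A z‖ = ‖WF z‖ := by
    intro z
    rw [hA z]
    exact hnorm z z.2 (hle z.2)
  have hker : LinearMap.ker WF.toFun ≤ LinearMap.ker A := by
    intro z hz
    rw [LinearMap.mem_ker] at hz ⊢
    have h1 := hAnorm z
    have h2 : WF z = 0 := hz
    rw [h2, norm_zero] at h1
    exact norm_eq_zero.mp h1
  set R : Submodule ℂ H := LinearMap.range WF.toFun with hRdef
  set B : R →ₗ[ℂ] H :=
    ((LinearMap.ker WF.toFun).liftQ A hker).comp
      (WF.toFun.quotKerEquivRange.symm : R →ₗ[ℂ] WF.domain ⧸ LinearMap.ker WF.toFun) with hBdef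
  have hB : ∀ z : WF.domain, B ⟨WF z, LinearMap.mem_range_self _ z⟩ = A z := by
    intro z
    have h1 : WF.toFun.quotKerEquivRange.symm ⟨WF.toFun z, LinearMap.mem_range_self _ z⟩ =
        (LinearMap.ker WF.toFun).mkQ z := LinearMap.quotKerEquivRange_symm_apply_image _ z _
    show ((LinearMap.ker WF.toFun).liftQ A hker)
        (WF.toFun.quotKerEquivRange.symm ⟨WF.toFun z, LinearMap.mem_range_self _ z⟩) = A z
    rw [h1]
    exact Submodule.liftQ_apply _ A z
  have hBnorm : ∀ w : R, ‖B w‖ = ‖(w : H)‖ := by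
    rintro ⟨w, hw⟩
    obtain ⟨z, hz⟩ := hw
    have h1 : (⟨w, ⟨z, hz⟩⟩ : R) = ⟨WF z, LinearMap.mem_range_self _ z⟩ := Subtype.ext hz.symm
    rw [h1, hB z, hAnorm z]
  set Bi : R →ₗᵢ[ℂ] H := ⟨B, hBnorm⟩ with hBidef
  set K : Submodule ℂ H := R.topologicalClosure with hKdef
  haveI hKcomplete : CompleteSpace K := R.isClosed_topologicalClosure.completeSpace_coe
  set einc : R →ₗᵢ[ℂ] K := ⟨Submodule.inclusion R.le_topologicalClosure, fun x => rfl⟩ with heincdef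
  set e : R →L[ℂ] K := einc.toContinuousLinearMap with hedef
  have he_ui : IsUniformInducing e := einc.isometry.isUniformInducing
  have he_dense : DenseRange e := by
    intro k
    rw [closure_subtype]
    have himg : (Subtype.val '' Set.range (e : R → K)) = (R : Set H) := by
      ext w
      constructor
      · rintro ⟨k', ⟨r, rfl⟩, rfl⟩
        exact r.2
      · intro hw
        exact ⟨e ⟨w, hw⟩, ⟨⟨w, hw⟩, rfl⟩, rfl⟩
    rw [himg, ← Submodule.topologicalClosure_coe]
    exact k.2
  set Bc : R →L[ℂ] H := Bi.toContinuousLinearMap with hBcdef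
  set Bext : K →L[ℂ] H := Bc.extend e with hBextdef
  have hBext_e : ∀ r : R, Bext (e r) = Bc r := fun r =>
    ContinuousLinearMap.extend_eq Bc he_dense he_ui r
  have hBext_norm : ∀ k : K, ‖Bext k‖ = ‖(k : H)‖ := by
    intro k
    refine he_dense.induction_on k ?_ ?_
    · exact isClosed_eq Bext.continuous.norm (continuous_norm.comp continuous_subtype_val)
    · intro r
      rw [hBext_e r]
      show ‖Bi r‖ = ‖((e r : K) : H)‖
      rw [Bi.norm_map r]
      rfl
  set P : H →L[ℂ] K := K.orthogonalProjectionOnto with hPdef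
  set U : H →L[ℂ] H := Bext.comp P with hUdef
  have hUapply : ∀ x : H, U x = Bext (P x) := fun x => rfl
  have hPnorm : ∀ x : H, ‖(P x : H)‖ ≤ ‖x‖ := by
    intro x
    have h1 : ‖P x‖ ≤ ‖P‖ * ‖x‖ := P.le_opNorm x
    have h2 : ‖P‖ ≤ 1 := Submodule.orthogonalProjectionOnto_norm_le K
    have h3 : ‖(P x : H)‖ = ‖P x‖ := rfl
    nlinarith [norm_nonneg x]
  have hmemK : ∀ z : WF.domain, WF z ∈ K :=
    fun z => R.le_topologicalClosure (LinearMap.mem_range_self _ z)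
  have hPK : ∀ (w : H) (hw : w ∈ K), P w = ⟨w, hw⟩ := by
    intro w hw
    exact Submodule.orthogonalProjectionOnto_mem_subspace_eq_self (⟨w, hw⟩ : K)
  have hUW : ∀ z : WF.domain, U (WF z) = A z := by
    intro z
    rw [hUapply, hPK (WF z) (hmemK z)]
    have h1 : (⟨WF z, hmemK z⟩ : K) = e ⟨WF z, LinearMap.mem_range_self _ z⟩ := Subtype.ext rfl
    rw [h1, hBext_e]
    show Bi ⟨WF z, LinearMap.mem_range_self _ z⟩ = A z
    exact hB z
  have hclos : closure (Set.range fun g : WF.domain => WF g) = (K : Set H) := by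
    rw [hKdef, Submodule.topologicalClosure_coe, hRdef, LinearMap.coe_range]
    rfl
  refine ⟨U, ?_, ?_, ?_, ?_, ?_⟩
  · -- norm bound
    refine U.opNorm_le_bound zero_le_one fun x => ?_
    rw [one_mul, hUapply, hBext_norm]
    exact hPnorm x
  · -- U (WF h) = WK h
    intro h hF hK
    rw [hUW ⟨h, hF⟩, hA]
  · -- isometry on closure of range
    intro x hx
    rw [hclos] at hx
    rw [hUapply, hPK x hx, hBext_norm]
  · -- vanishing on orthogonal complement
    intro x hx
    have hxK : x ∈ Kᗮ := by
      rw [Submodule.mem_orthogonal]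
      intro u hu
      have hRsub : (R : Set H) ⊆ {u : H | ⟪u, x⟫ = 0} := by
        rintro u ⟨g, rfl⟩
        exact hx g
      have hclosed : IsClosed {u : H | ⟪u, x⟫ = 0} :=
        isClosed_eq (continuous_id.inner continuous_const) continuous_const
      have h2 : (K : Set H) ⊆ {u : H | ⟪u, x⟫ = 0} := by
        rw [hKdef, Submodule.topologicalClosure_coe]
        exact closure_minimal hRsub hclosed
      exact h2 hu
    rw [hUapply, Submodule.orthogonalProjectionOnto_apply_of_mem_orthogonal hxK, map_zero]
  · -- range contained in closure of range of WK
    intro x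
    set C := closure (Set.range fun g : WK.domain => WK g) with hCdef
    have hall : ∀ k : K, Bext k ∈ C := by
      intro k
      refine he_dense.induction_on k ?_ ?_
      · exact isClosed_closure.preimage Bext.continuous
      · rintro ⟨w, hw⟩
        obtain ⟨z, hz⟩ := hw
        have h1 : (⟨w, ⟨z, hz⟩⟩ : R) = ⟨WF z, LinearMap.mem_range_self _ z⟩ := Subtype.ext hz.symm
        rw [hBext_e]
        show Bi ⟨w, ⟨z, hz⟩⟩ ∈ C
        rw [h1]
        have h2 : Bi ⟨WF z, LinearMap.mem_range_self _ z⟩ = A z := hB z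
        rw [h2, hA]
        exact subset_closure ⟨⟨(z : H), hle z.2⟩, rfl⟩
    rw [hUapply]
    exact hall (P x)
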